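/- Let A be the companion matrix of the polynomial x⁴ − 2x³ − 2x + 1 acting on ℚ⁴. This polynomial is irreducible over ℚ and has four distinct complex roots, exactly two of which lie on the unit circle. -/

import Mathlib

open Polynomial

noncomputable section
namespace Stmt8Aux

lemma quad_eq {R : Type*} [CommRing R] (f : R[X]) (hf : f.Monic) (h2 : f.natDegree = 2) :
    f = X ^ 2 + C (f.coeff 1) * X + C (f.coeff 0) := by
  ext n
  have hc2 : f.coeff 2 = 1 := by
    have := hf.coeff_natDegree
    rwa [h2] at this
  match n with
  | 0 => simp
  | 1 => simp
  | 2 => simp [hc2, coeff_X, coeff_C]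
  | (n+3) =>
    have h : f.coeff (n+3) = 0 := coeff_eq_zero_of_natDegree_lt (by omega)
    rw [h]
    simp [coeff_X, coeff_C, coeff_X_pow]

lemma Pz_monic : (X ^ 4 - C 2 * X ^ 3 - C 2 * X + 1 : ℤ[X]).Monic := by
  monicity!

lemma Pz_deg : (X ^ 4 - C 2 * X ^ 3 - C 2 * X + 1 : ℤ[X]).natDegree = 4 := by
  compute_degree!

lemma no_int_sq_three (z : ℤ) : z ^ 2 ≠ 3 := by
  intro h
  have h1 : -2 < z := by nlinarith
  have h2 : z < 2 := by nlinarith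
  interval_cases z <;> omega

lemma irr_int : Irreducible (X ^ 4 - C 2 * X ^ 3 - C 2 * X + 1 : ℤ[X]) := by
  rw [Pz_monic.irreducible_iff_natDegree']
  constructor
  · intro h
    have := congrArg natDegree h
    rw [Pz_deg] at this
    simp at this
  rintro f g hf hg he hdeg
  rw [Pz_deg] at hdeg
  have hmem := Finset.mem_Ioc.mp hdeg
  have hsum : f.natDegree + g.natDegree = 4 := by
    have := hf.natDegree_mul hg
    rw [he, Pz_deg] at this
    omega
  rcases (by omega : g.natDegree = 1 ∨ g.natDegree = 2) with h1 | h2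
  · -- linear factor
    have hgeq := hg.eq_X_add_C h1
    set a := g.coeff 0 with ha
    have hev := congrArg (eval (-a)) he
    rw [hgeq] at hev
    simp only [eval_mul, eval_add, eval_sub, eval_pow, eval_X, eval_C, eval_one] at hev
    have hev' : a ^ 4 + 2 * a ^ 3 + 2 * a + 1 = 0 := by linarith [hev]
    have hu : a * (-(a ^ 3 + 2 * a ^ 2 + 2)) = 1 := by ring_nf; linarith
    rcases Int.isUnit_iff.mp (IsUnit.of_mul_eq_one _ hu) with h | h <;> rw [h] at hev' <;> omega
  · -- quadratic factors
    have hf2 : f.natDegree = 2 := by omega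
    have hfe := quad_eq f hf hf2
    have hge := quad_eq g hg h2
    set a := f.coeff 1; set b := f.coeff 0; set c := g.coeff 1; set d := g.coeff 0
    rw [hfe, hge] at he
    have e0 := congrArg (eval 0) he
    have e1 := congrArg (eval 1) he
    have e2 := congrArg (eval (-1)) he
    simp only [eval_mul, eval_add, eval_sub, eval_pow, eval_X, eval_C, eval_one] at e0 e1 e2
    norm_num at e0 e1 e2
    rcases Int.mul_eq_one_iff_eq_one_or_neg_one.mp e0 with ⟨hb, hd⟩ | ⟨hb, hd⟩ <;>
      rw [hb, hd] at e1 e2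
    · have hs : a + c = -2 := by nlinarith
      have hp : a * c = -2 := by nlinarith
      exact no_int_sq_three (a + 1) (by linear_combination a * hs - hp)
    · nlinarith

lemma irr_rat : Irreducible (X ^ 4 - C 2 * X ^ 3 - C 2 * X + 1 : ℚ[X]) := by
  have h := (Pz_monic.irreducible_iff_irreducible_map_fraction_map (K := ℚ)).mp irr_int
  have hm : (X ^ 4 - C 2 * X ^ 3 - C 2 * X + 1 : ℤ[X]).map (algebraMap ℤ ℚ) =
      (X ^ 4 - C 2 * X ^ 3 - C 2 * X + 1 : ℚ[X]) := by
    simp [Polynomial.map_add, Polynomial.map_sub, Polynomial.map_mul, Polynomial.map_pow,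
      Polynomial.map_one, Polynomial.map_ofNat, map_ofNat]
  rwa [hm] at h

def s : ℝ := Real.sqrt 3
def t : ℝ := Real.sqrt (2 * s)

lemma hs2 : s ^ 2 = 3 := Real.sq_sqrt (by norm_num)
lemma hs0 : 0 < s := Real.sqrt_pos.mpr (by norm_num)
lemma hs1 : 1 < s := by nlinarith [hs2, hs0]
lemma hslt : s < 2 := by nlinarith [hs2, hs0]
lemma ht2 : t ^ 2 = 2 * s := Real.sq_sqrt (by nlinarith [hs0])
lemma ht0 : 0 < t := Real.sqrt_pos.mpr (by nlinarith [hs0])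

def z1 : ℂ := ((1 + s + t) / 2 : ℝ)
def z2 : ℂ := ((1 + s - t) / 2 : ℝ)
def z3 : ℂ := (((1 - s) / 2 : ℝ) : ℂ) + ((t / 2 : ℝ) : ℂ) * Complex.I
def z4 : ℂ := (((1 - s) / 2 : ℝ) : ℂ) - ((t / 2 : ℝ) : ℂ) * Complex.I

lemma hSc : ((s : ℂ)) ^ 2 = 3 := by exact_mod_cast hs2
lemma hTc : ((t : ℂ)) ^ 2 = 2 * (s : ℂ) := by exact_mod_cast ht2

lemma sum12 : z1 + z2 = 1 + (s : ℂ) := by unfold z1 z2; push_cast; ring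
lemma prod12 : z1 * z2 = 1 := by
  unfold z1 z2; push_cast
  linear_combination hSc / 4 - hTc / 4
lemma sum34 : z3 + z4 = 1 - (s : ℂ) := by unfold z3 z4; push_cast; ring
lemma prod34 : z3 * z4 = 1 := by
  unfold z3 z4; push_cast
  linear_combination hSc / 4 + hTc / 4 - (t:ℂ)^2 / 4 * Complex.I_sq

lemma h12 : ((X : ℂ[X]) - C z1) * (X - C z2) = X ^ 2 - C (1 + (s:ℂ)) * X + 1 := by
  have : ((X : ℂ[X]) - C z1) * (X - C z2) = X ^ 2 - (C z1 + C z2) * X + C z1 * C z2 := by ring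
  rw [this, ← C_add, ← C_mul, sum12, prod12, C_1]

lemma h34 : ((X : ℂ[X]) - C z3) * (X - C z4) = X ^ 2 - C (1 - (s:ℂ)) * X + 1 := by
  have : ((X : ℂ[X]) - C z3) * (X - C z4) = X ^ 2 - (C z3 + C z4) * X + C z3 * C z4 := by ring
  rw [this, ← C_add, ← C_mul, sum34, prod34, C_1]

lemma hC2 : (C 2 : ℂ[X]) = 2 := map_ofNat C 2

lemma hfac : (X ^ 4 - C 2 * X ^ 3 - C 2 * X + 1 : ℂ[X]) =
    ((X - C z1) * (X - C z2)) * ((X - C z3) * (X - C z4)) := by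
  rw [h12, h34, hC2]
  have h1 : (C (1 + (s:ℂ)) : ℂ[X]) + C (1 - (s:ℂ)) = 2 := by
    rw [← C_add]
    rw [show (1 + (s:ℂ)) + (1 - (s:ℂ)) = 2 by ring, hC2]
  have h2 : (C (1 + (s:ℂ)) : ℂ[X]) * C (1 - (s:ℂ)) = -2 := by
    rw [← C_mul]
    have h : (1 + (s:ℂ)) * (1 - (s:ℂ)) = -2 := by linear_combination -hSc
    rw [h, show ((-2 : ℂ)) = -(2:ℂ) by ring, map_neg, hC2]
  linear_combination (X ^ 3 + X : ℂ[X]) * h1 - (X ^ 2 : ℂ[X]) * h2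

lemma hroots : (X ^ 4 - C 2 * X ^ 3 - C 2 * X + 1 : ℂ[X]).roots = {z1, z2, z3, z4} := by
  have h : (X ^ 4 - C 2 * X ^ 3 - C 2 * X + 1 : ℂ[X]) =
      (({z1, z2, z3, z4} : Multiset ℂ).map fun a => X - C a).prod := by
    rw [hfac]
    simp only [Multiset.insert_eq_cons, Multiset.map_cons, Multiset.map_singleton,
      Multiset.prod_cons, Multiset.prod_singleton]
    ring
  rw [h, roots_multiset_prod_X_sub_C]

lemma im1 : z1.im = 0 := by simp [z1]
lemma im2 : z2.im = 0 := by simp [z2]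
lemma im3 : z3.im = t / 2 := by simp [z3]
lemma im4 : z4.im = -(t / 2) := by simp [z4]

lemma hz12 : z1 ≠ z2 := by
  intro h
  rw [z1, z2, Complex.ofReal_inj] at h
  have := ht0; linarith
lemma hz13 : z1 ≠ z3 := by
  intro h; have := congrArg Complex.im h; rw [im1, im3] at this; have := ht0; linarith
lemma hz14 : z1 ≠ z4 := by
  intro h; have := congrArg Complex.im h; rw [im1, im4] at this; have := ht0; linarith
lemma hz23 : z2 ≠ z3 := by
  intro h; have := congrArg Complex.im h; rw [im2, im3] at this; have := ht0; linarith
lemma hz24 : z2 ≠ z4 := by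
  intro h; have := congrArg Complex.im h; rw [im2, im4] at this; have := ht0; linarith
lemma hz34 : z3 ≠ z4 := by
  intro h; have := congrArg Complex.im h; rw [im3, im4] at this; have := ht0; linarith

lemma habs1 : ¬ ‖z1‖ = 1 := by
  rw [z1, Complex.norm_real, Real.norm_eq_abs]
  have h1 : 1 < (1 + s + t) / 2 := by nlinarith [hs1, ht0]
  rw [abs_of_pos (by linarith)]
  linarith

lemma habs2 : ¬ ‖z2‖ = 1 := by
  have htlt : t < 1 + s := by nlinarith [ht2, hs2, ht0, hs0]
  have htgt : s - 1 < t := by nlinarith [ht2, hs2, ht0, hs1, hslt]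
  rw [z2, Complex.norm_real, Real.norm_eq_abs]
  rw [abs_of_pos (by linarith)]
  intro h; linarith

lemma habs3 : ‖z3‖ = 1 := by
  rw [Complex.norm_def]
  have h : Complex.normSq z3 = 1 := by
    simp [z3, Complex.normSq_apply]
    nlinarith [hs2, ht2]
  rw [h, Real.sqrt_one]

lemma habs4 : ‖z4‖ = 1 := by
  rw [Complex.norm_def]
  have h : Complex.normSq z4 = 1 := by
    simp [z4, Complex.normSq_apply]
    nlinarith [hs2, ht2]
  rw [h, Real.sqrt_one]

lemma hmapq : (X ^ 4 - C 2 * X ^ 3 - C 2 * X + 1 : ℚ[X]).map (algebraMap ℚ ℂ) =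
    (X ^ 4 - C 2 * X ^ 3 - C 2 * X + 1 : ℂ[X]) := by
  simp [Polynomial.map_add, Polynomial.map_sub, Polynomial.map_mul, Polynomial.map_pow,
    Polynomial.map_one, Polynomial.map_ofNat]

end Stmt8Aux
end

open Stmt8Aux in
/-- The polynomial `x⁴ − 2x³ − 2x + 1` is irreducible over ℚ and has four
distinct complex roots, exactly two of which lie on the unit circle. -/
theorem stmt_8 :
    let p : ℚ[X] := X ^ 4 - C 2 * X ^ 3 - C 2 * X + 1
    Irreducible p ∧
      (p.map (algebraMap ℚ ℂ)).roots.toFinset.card = 4 ∧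
      (p.map (algebraMap ℚ ℂ)).roots.card = 4 ∧
      ((p.map (algebraMap ℚ ℂ)).roots.toFinset.filter
        (fun z => ‖z‖ = 1)).card = 2 := by
  intro p
  have hmap : p.map (algebraMap ℚ ℂ) = (X ^ 4 - C 2 * X ^ 3 - C 2 * X + 1 : ℂ[X]) := hmapq
  have hts : (p.map (algebraMap ℚ ℂ)).roots.toFinset = insert z1 (insert z2 (insert z3 {z4})) := by
    rw [hmap, hroots]
    simp [Multiset.insert_eq_cons]
  refine ⟨irr_rat, ?_, ?_, ?_⟩
  · rw [hts]
    rw [Finset.card_insert_of_notMem (by simp [hz12, hz13, hz14]),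
      Finset.card_insert_of_notMem (by simp [hz23, hz24]),
      Finset.card_insert_of_notMem (by simp [hz34]),
      Finset.card_singleton]
  · rw [hmap, hroots]
    simp [Multiset.insert_eq_cons]
  · rw [hts]
    rw [Finset.filter_insert, Finset.filter_insert, Finset.filter_insert]
    rw [if_neg habs1, if_neg habs2, if_pos habs3]
    rw [Finset.filter_singleton, if_pos habs4]
    rw [Finset.card_insert_of_notMem (by simp [hz34]), Finset.card_singleton]
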